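/- The function t ↦ t·cos(t)/sin(t) is concave on the interval (0, π). (This is the function f₄(p) = −(x·y)F'(x·y) arising from the squared geodesic cost c(x,y) = (1/2)d_{S²}(x,y)² on the unit sphere, expressed as a function of t = ‖p‖.) -/

import Mathlib

open Real Set

noncomputable section

lemma aux_sin_pos {t : ℝ} (ht : t ∈ Set.Ioo 0 π) : 0 < Real.sin t :=
  Real.sin_pos_of_pos_of_lt_pi ht.1 ht.2

lemma aux_tcos_lt_sin {t : ℝ} (ht : t ∈ Set.Ioo 0 π) : t * Real.cos t < Real.sin t := by
  rcases le_or_gt (Real.cos t) 0 with h | h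
  · have : t * Real.cos t ≤ 0 := mul_nonpos_of_nonneg_of_nonpos ht.1.le h
    linarith [aux_sin_pos ht]
  · have htlt : t < π / 2 := by
      by_contra hle
      push_neg at hle
      have := Real.cos_nonpos_of_pi_div_two_le_of_le hle (by linarith [ht.2, Real.pi_pos])
      linarith
    have := Real.lt_tan ht.1 htlt
    rw [Real.tan_eq_sin_div_cos] at this
    calc t * Real.cos t < (Real.sin t / Real.cos t) * Real.cos t := by
          exact mul_lt_mul_of_pos_right this h
      _ = Real.sin t := by field_simp

/-- The function `t ↦ t·cos t / sin t` is concave on `(0, π)`. This is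
`f₄(p) = -(x·y)F'(x·y)` for the squared geodesic cost on the unit sphere as a function of
`t = ‖p‖`. -/
theorem stmt_16 :
    ConcaveOn ℝ (Set.Ioo 0 π) (fun t : ℝ => t * Real.cos t / Real.sin t) := by
  have hconv : ConvexOn ℝ (Set.Ioo 0 π) (fun t : ℝ => -(t * Real.cos t / Real.sin t)) := by
    have hint : interior (Set.Ioo (0:ℝ) π) = Set.Ioo 0 π := interior_Ioo
    apply convexOn_of_hasDerivWithinAt2_nonneg (f' := fun t => (t - Real.cos t * Real.sin t) / (Real.sin t)^2)
      (f'' := fun t => 2 * (Real.sin t - t * Real.cos t) / (Real.sin t)^3) (convex_Ioo 0 π)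
    · apply ContinuousOn.neg
      apply ContinuousOn.div
      · exact (continuous_id.mul Real.continuous_cos).continuousOn
      · exact Real.continuous_sin.continuousOn
      · intro t ht
        exact (aux_sin_pos ht).ne'
    · intro t ht
      rw [hint] at ht
      have hs := (aux_sin_pos ht).ne'
      have h1 : HasDerivAt (fun t : ℝ => -(t * Real.cos t / Real.sin t))
          ((t - Real.cos t * Real.sin t) / (Real.sin t)^2) t := by
        have hnum : HasDerivAt (fun t : ℝ => t * Real.cos t)
            (1 * Real.cos t + t * (-Real.sin t)) t :=
          (hasDerivAt_id t).mul (Real.hasDerivAt_cos t)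
        have hdiv := hnum.div (Real.hasDerivAt_sin t) hs
        have := hdiv.neg
        refine this.congr_deriv ?_
        have hpy := Real.sin_sq_add_cos_sq t
        field_simp
        linear_combination ((-t) * Real.sin t ^ 2 + t * (Real.sin t ^ 2 - 1) + 2 * t) * hpy
      rw [hint]
      exact h1.hasDerivWithinAt
    · intro t ht
      rw [hint] at ht
      have hs := (aux_sin_pos ht).ne'
      have hnum : HasDerivAt (fun t : ℝ => t - Real.cos t * Real.sin t)
          (1 - ((-Real.sin t) * Real.sin t + Real.cos t * Real.cos t)) t :=
        (hasDerivAt_id t).sub ((Real.hasDerivAt_cos t).mul (Real.hasDerivAt_sin t))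
      have hden : HasDerivAt (fun t : ℝ => (Real.sin t)^2)
          (2 * Real.sin t ^ 1 * Real.cos t) t := (Real.hasDerivAt_sin t).pow 2
      have hdiv := hnum.div hden (pow_ne_zero 2 hs)
      have heq : (1 - ((-Real.sin t) * Real.sin t + Real.cos t * Real.cos t)) * (Real.sin t)^2
          - (t - Real.cos t * Real.sin t) * (2 * Real.sin t ^ 1 * Real.cos t) =
          2 * (Real.sin t - t * Real.cos t) * Real.sin t := by
        have hpy := Real.sin_sq_add_cos_sq t
        nlinarith [hpy]
      rw [hint]
      have h2 : HasDerivAt (fun t : ℝ => (t - Real.cos t * Real.sin t) / (Real.sin t)^2)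
          (2 * (Real.sin t - t * Real.cos t) / (Real.sin t)^3) t := by
        refine hdiv.congr_deriv ?_
        rw [div_eq_div_iff (by positivity) (by positivity)]
        have hpy := Real.sin_sq_add_cos_sq t
        linear_combination (-(Real.sin t) ^ 5 + 2 * Real.sin t ^ 5) * hpy
      exact h2.hasDerivWithinAt
    · intro t ht
      rw [hint] at ht
      have h1 := aux_sin_pos ht
      have h2 := aux_tcos_lt_sin ht
      apply div_nonneg
      · nlinarith
      · positivity
  have h := hconv.neg
  refine (congrArg (ConcaveOn ℝ (Set.Ioo 0 π)) ?_).mpr h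
  funext t
  simp
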